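/- arXiv:2109.14609 — 4 statements merged into one kernel-verified Lean document; each statement's English description precedes it below -/
import Mathlib

section
/- Let H₁ be an r₁ × n₁ matrix and H₂ an r₂ × n₂ matrix, both with entries in the field with two elements F₂ = ZMod 2. Define the block matrices H_X = [ H₁ ⊗ I_{n₂} | I_{r₁} ⊗ H₂ᵀ ] (of size r₁n₂ × (n₁n₂ + r₁r₂)) and H_Z = [ I_{n₁} ⊗ H₂ | H₁ᵀ ⊗ I_{r₂} ] (of size n₁r₂ × (n₁n₂ + r₁r₂)), where ⊗ denotes the Kronecker product of matrices and I_m the m × m identity matrix. Then H_X · H_Zᵀ = 0. -/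
open Matrix Kronecker

/-- For any matrices `H₁ : r₁ × n₁` and `H₂ : r₂ × n₂` over `F₂ = ZMod 2`,
the hypergraph-product parity check matrices
`H_X = [ H₁ ⊗ I_{n₂} | I_{r₁} ⊗ H₂ᵀ ]` and `H_Z = [ I_{n₁} ⊗ H₂ | H₁ᵀ ⊗ I_{r₂} ]`
satisfy `H_X · H_Zᵀ = 0`, i.e. the hypergraph product is a valid CSS code. -/
theorem hgp_css_condition {r₁ n₁ r₂ n₂ : ℕ}
    (H₁ : Matrix (Fin r₁) (Fin n₁) (ZMod 2)) (H₂ : Matrix (Fin r₂) (Fin n₂) (ZMod 2)) :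
    (Matrix.fromCols
        (H₁ ⊗ₖ (1 : Matrix (Fin n₂) (Fin n₂) (ZMod 2)))
        ((1 : Matrix (Fin r₁) (Fin r₁) (ZMod 2)) ⊗ₖ H₂ᵀ)) *
      (Matrix.fromCols
        ((1 : Matrix (Fin n₁) (Fin n₁) (ZMod 2)) ⊗ₖ H₂)
        (H₁ᵀ ⊗ₖ (1 : Matrix (Fin r₂) (Fin r₂) (ZMod 2))))ᵀ = 0 := by
  rw [transpose_fromCols, fromCols_mul_fromRows,
    ← kroneckerMap_transpose, ← kroneckerMap_transpose, transpose_one, transpose_one,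
    transpose_transpose, ← mul_kronecker_mul, ← mul_kronecker_mul]
  simp only [Matrix.mul_one, Matrix.one_mul]
  rw [← two_smul (ZMod 2) (H₁ ⊗ₖ H₂ᵀ)]
  have : (2 : ZMod 2) = 0 := by decide
  rw [this, zero_smul]
end

section
/- Let G₁ and G₂ be finite simple bipartite graphs whose vertex sets are ZMod n₁ and ZMod n₂ respectively (n₁, n₂ ≥ 1), with bipartitions V(G₁) = B₁ ∪ C₁ and V(G₂) = B₂ ∪ C₂. Let T be the box product G₁ □ G₂, and let T_N, T_S, T_E, T_W be the four directed-edge spanning subgraphs of T determined by the labelings (defined in the context). Then deg(T) ≤ deg(T_N) + deg(T_S) + deg(T_E) + deg(T_W) ≤ 2 · deg(T), where deg(·) denotes maximum degree. -/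
open scoped Classical

/-- Qubit vertices `(B₁ × B₂) ∪ (C₁ × C₂)` of the hypergraph product. -/
def qubitSet {n₁ n₂ : ℕ} (B₁ C₁ : Set (ZMod n₁)) (B₂ C₂ : Set (ZMod n₂)) :
    Set (ZMod n₁ × ZMod n₂) :=
  (B₁ ×ˢ B₂) ∪ (C₁ ×ˢ C₂)

/-- Stabilizer vertices `(B₁ × C₂) ∪ (C₁ × B₂)` of the hypergraph product. -/
def stabSet {n₁ n₂ : ℕ} (B₁ C₁ : Set (ZMod n₁)) (B₂ C₂ : Set (ZMod n₂)) :
    Set (ZMod n₁ × ZMod n₂) :=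
  (B₁ ×ˢ C₂) ∪ (C₁ ×ˢ B₂)

/-- The direction-`N` spanning subgraph of the box product `T = G₁ □ G₂`: vertical edges whose
stabilizer endpoint `(i, j)` and qubit endpoint `(i, j + ℓ)` (with `ℓ ∈ {1, …, n₂ - 1}`)
satisfy `ℓ ≤ n₂ / 2`, i.e. `2 * ℓ ≤ n₂`. Here `ℓ` is recovered as `(j' - j).val`. -/
def dirN {n₁ n₂ : ℕ} (G₁ : SimpleGraph (ZMod n₁)) (G₂ : SimpleGraph (ZMod n₂))
    (stab : Set (ZMod n₁ × ZMod n₂)) : SimpleGraph (ZMod n₁ × ZMod n₂) where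
  Adj p q := (G₁.boxProd G₂).Adj p q ∧ p.1 = q.1 ∧
    ((p ∈ stab ∧ 2 * (q.2 - p.2).val ≤ n₂) ∨ (q ∈ stab ∧ 2 * (p.2 - q.2).val ≤ n₂))
  symm := ⟨fun _ _ ⟨h1, h2, h3⟩ => ⟨h1.symm, h2.symm, h3.symm⟩⟩
  loopless := ⟨fun p ⟨h1, _, _⟩ => (G₁.boxProd G₂).loopless.irrefl p h1⟩

/-- The direction-`S` spanning subgraph: vertical edges with `ℓ > n₂ / 2`. -/
def dirS {n₁ n₂ : ℕ} (G₁ : SimpleGraph (ZMod n₁)) (G₂ : SimpleGraph (ZMod n₂))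
    (stab : Set (ZMod n₁ × ZMod n₂)) : SimpleGraph (ZMod n₁ × ZMod n₂) where
  Adj p q := (G₁.boxProd G₂).Adj p q ∧ p.1 = q.1 ∧
    ((p ∈ stab ∧ n₂ < 2 * (q.2 - p.2).val) ∨ (q ∈ stab ∧ n₂ < 2 * (p.2 - q.2).val))
  symm := ⟨fun _ _ ⟨h1, h2, h3⟩ => ⟨h1.symm, h2.symm, h3.symm⟩⟩
  loopless := ⟨fun p ⟨h1, _, _⟩ => (G₁.boxProd G₂).loopless.irrefl p h1⟩

/-- The direction-`E` spanning subgraph: horizontal edges whose stabilizer endpoint `(i, j)` and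
qubit endpoint `(i + ℓ, j)` satisfy `ℓ ≤ n₁ / 2`, i.e. `2 * ℓ ≤ n₁`. -/
def dirE {n₁ n₂ : ℕ} (G₁ : SimpleGraph (ZMod n₁)) (G₂ : SimpleGraph (ZMod n₂))
    (stab : Set (ZMod n₁ × ZMod n₂)) : SimpleGraph (ZMod n₁ × ZMod n₂) where
  Adj p q := (G₁.boxProd G₂).Adj p q ∧ p.2 = q.2 ∧
    ((p ∈ stab ∧ 2 * (q.1 - p.1).val ≤ n₁) ∨ (q ∈ stab ∧ 2 * (p.1 - q.1).val ≤ n₁))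
  symm := ⟨fun _ _ ⟨h1, h2, h3⟩ => ⟨h1.symm, h2.symm, h3.symm⟩⟩
  loopless := ⟨fun p ⟨h1, _, _⟩ => (G₁.boxProd G₂).loopless.irrefl p h1⟩

/-- The direction-`W` spanning subgraph: horizontal edges with `ℓ > n₁ / 2`. -/
def dirW {n₁ n₂ : ℕ} (G₁ : SimpleGraph (ZMod n₁)) (G₂ : SimpleGraph (ZMod n₂))
    (stab : Set (ZMod n₁ × ZMod n₂)) : SimpleGraph (ZMod n₁ × ZMod n₂) where
  Adj p q := (G₁.boxProd G₂).Adj p q ∧ p.2 = q.2 ∧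
    ((p ∈ stab ∧ n₁ < 2 * (q.1 - p.1).val) ∨ (q ∈ stab ∧ n₁ < 2 * (p.1 - q.1).val))
  symm := ⟨fun _ _ ⟨h1, h2, h3⟩ => ⟨h1.symm, h2.symm, h3.symm⟩⟩
  loopless := ⟨fun p ⟨h1, _, _⟩ => (G₁.boxProd G₂).loopless.irrefl p h1⟩

/-- `δ₊(G, j)`: the number of neighbors of `j` of the form `j + ℓ (mod n)` with
`0 < ℓ ≤ n / 2` (i.e. `2 * ℓ ≤ n`). -/
noncomputable def deltaPlus {n : ℕ} (G : SimpleGraph (ZMod n)) (j : ZMod n) : ℕ :=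
  {j' | G.Adj j j' ∧ 0 < (j' - j).val ∧ 2 * (j' - j).val ≤ n}.ncard

/-- `δ₋(G, j) = deg(j) - δ₊(G, j)`. -/
noncomputable def deltaMinus {n : ℕ} [NeZero n] (G : SimpleGraph (ZMod n)) (j : ZMod n) : ℕ :=
  G.degree j - deltaPlus G j

section AuxLemmas

variable {n₁ n₂ : ℕ} {G₁ : SimpleGraph (ZMod n₁)} {G₂ : SimpleGraph (ZMod n₂)}

private lemma vert_adj {p q : ZMod n₁ × ZMod n₂} (h : (G₁.boxProd G₂).Adj p q)
    (he : p.1 = q.1) : G₂.Adj p.2 q.2 := by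
  rcases SimpleGraph.boxProd_adj.mp h with ⟨h1, _⟩ | ⟨h2, _⟩
  · exact (h1.ne he).elim
  · exact h2

private lemma horiz_adj {p q : ZMod n₁ × ZMod n₂} (h : (G₁.boxProd G₂).Adj p q)
    (he : p.2 = q.2) : G₁.Adj p.1 q.1 := by
  rcases SimpleGraph.boxProd_adj.mp h with ⟨h1, _⟩ | ⟨h2, he'⟩
  · exact h1
  · exact (h2.ne he).elim

private lemma degN_le [NeZero n₁] [NeZero n₂] (stab : Set (ZMod n₁ × ZMod n₂))
    (v : ZMod n₁ × ZMod n₂) : (dirN G₁ G₂ stab).degree v ≤ G₂.degree v.2 := by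
  rw [SimpleGraph.degree, SimpleGraph.degree]
  apply Finset.card_le_card_of_injOn (fun q => q.2)
  · intro q hq
    rw [Finset.mem_coe, SimpleGraph.mem_neighborFinset] at hq
    rw [Finset.mem_coe, SimpleGraph.mem_neighborFinset]
    exact vert_adj hq.1 hq.2.1
  · intro a ha b hb hab
    rw [Finset.mem_coe, SimpleGraph.mem_neighborFinset] at ha hb
    exact Prod.ext (ha.2.1.symm.trans hb.2.1) hab

private lemma degS_le [NeZero n₁] [NeZero n₂] (stab : Set (ZMod n₁ × ZMod n₂))
    (v : ZMod n₁ × ZMod n₂) : (dirS G₁ G₂ stab).degree v ≤ G₂.degree v.2 := by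
  rw [SimpleGraph.degree, SimpleGraph.degree]
  apply Finset.card_le_card_of_injOn (fun q => q.2)
  · intro q hq
    rw [Finset.mem_coe, SimpleGraph.mem_neighborFinset] at hq
    rw [Finset.mem_coe, SimpleGraph.mem_neighborFinset]
    exact vert_adj hq.1 hq.2.1
  · intro a ha b hb hab
    rw [Finset.mem_coe, SimpleGraph.mem_neighborFinset] at ha hb
    exact Prod.ext (ha.2.1.symm.trans hb.2.1) hab

private lemma degE_le [NeZero n₁] [NeZero n₂] (stab : Set (ZMod n₁ × ZMod n₂))
    (v : ZMod n₁ × ZMod n₂) : (dirE G₁ G₂ stab).degree v ≤ G₁.degree v.1 := by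
  rw [SimpleGraph.degree, SimpleGraph.degree]
  apply Finset.card_le_card_of_injOn (fun q => q.1)
  · intro q hq
    rw [Finset.mem_coe, SimpleGraph.mem_neighborFinset] at hq
    rw [Finset.mem_coe, SimpleGraph.mem_neighborFinset]
    exact horiz_adj hq.1 hq.2.1
  · intro a ha b hb hab
    rw [Finset.mem_coe, SimpleGraph.mem_neighborFinset] at ha hb
    exact Prod.ext hab (ha.2.1.symm.trans hb.2.1)

private lemma degW_le [NeZero n₁] [NeZero n₂] (stab : Set (ZMod n₁ × ZMod n₂))
    (v : ZMod n₁ × ZMod n₂) : (dirW G₁ G₂ stab).degree v ≤ G₁.degree v.1 := by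
  rw [SimpleGraph.degree, SimpleGraph.degree]
  apply Finset.card_le_card_of_injOn (fun q => q.1)
  · intro q hq
    rw [Finset.mem_coe, SimpleGraph.mem_neighborFinset] at hq
    rw [Finset.mem_coe, SimpleGraph.mem_neighborFinset]
    exact horiz_adj hq.1 hq.2.1
  · intro a ha b hb hab
    rw [Finset.mem_coe, SimpleGraph.mem_neighborFinset] at ha hb
    exact Prod.ext hab (ha.2.1.symm.trans hb.2.1)

end AuxLemmas

/-- Lemma 4 of the paper, two-sided bound. For bipartite input graphs `G₁`,
`G₂` on `ZMod n₁`, `ZMod n₂` with the box product `T = G₁ □ G₂` and its four directed-edge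
spanning subgraphs `T_N, T_S, T_E, T_W`, we have
`deg(T) ≤ deg(T_N) + deg(T_S) + deg(T_E) + deg(T_W) ≤ 2 · deg(T)`. -/
theorem direction_subgraphs_maxDegree_bounds {n₁ n₂ : ℕ} [NeZero n₁] [NeZero n₂]
    (G₁ : SimpleGraph (ZMod n₁)) (G₂ : SimpleGraph (ZMod n₂))
    (B₁ C₁ : Set (ZMod n₁)) (B₂ C₂ : Set (ZMod n₂))
    (hcover₁ : B₁ ∪ C₁ = Set.univ) (hdisj₁ : Disjoint B₁ C₁)
    (hcover₂ : B₂ ∪ C₂ = Set.univ) (hdisj₂ : Disjoint B₂ C₂)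
    (hbip₁ : ∀ u v, G₁.Adj u v → (u ∈ B₁ ∧ v ∈ C₁) ∨ (u ∈ C₁ ∧ v ∈ B₁))
    (hbip₂ : ∀ u v, G₂.Adj u v → (u ∈ B₂ ∧ v ∈ C₂) ∨ (u ∈ C₂ ∧ v ∈ B₂))
    :
    (G₁.boxProd G₂).maxDegree ≤
        (dirN G₁ G₂ (stabSet B₁ C₁ B₂ C₂)).maxDegree +
        (dirS G₁ G₂ (stabSet B₁ C₁ B₂ C₂)).maxDegree +
        (dirE G₁ G₂ (stabSet B₁ C₁ B₂ C₂)).maxDegree +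
        (dirW G₁ G₂ (stabSet B₁ C₁ B₂ C₂)).maxDegree ∧
      (dirN G₁ G₂ (stabSet B₁ C₁ B₂ C₂)).maxDegree +
        (dirS G₁ G₂ (stabSet B₁ C₁ B₂ C₂)).maxDegree +
        (dirE G₁ G₂ (stabSet B₁ C₁ B₂ C₂)).maxDegree +
        (dirW G₁ G₂ (stabSet B₁ C₁ B₂ C₂)).maxDegree ≤
      2 * (G₁.boxProd G₂).maxDegree := by
  classical
  set stab := stabSet B₁ C₁ B₂ C₂ with hstab
  -- each edge of the box product lies in one of the four directed subgraphs
  have hstabV : ∀ p q : ZMod n₁ × ZMod n₂, p.1 = q.1 → G₂.Adj p.2 q.2 →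
      p ∈ stab ∨ q ∈ stab := by
    intro p q he h2
    have h1 : p.1 ∈ B₁ ∪ C₁ := hcover₁ ▸ Set.mem_univ _
    simp only [hstab, stabSet, Set.mem_union, Set.mem_prod, ← he]
    rcases h1 with hB | hC <;> rcases hbip₂ _ _ h2 with ⟨hb, hc⟩ | ⟨hc, hb⟩ <;> tauto
  have hstabH : ∀ p q : ZMod n₁ × ZMod n₂, p.2 = q.2 → G₁.Adj p.1 q.1 →
      p ∈ stab ∨ q ∈ stab := by
    intro p q he h1
    have h2 : p.2 ∈ B₂ ∪ C₂ := hcover₂ ▸ Set.mem_univ _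
    simp only [hstab, stabSet, Set.mem_union, Set.mem_prod, ← he]
    rcases h2 with hB | hC <;> rcases hbip₁ _ _ h1 with ⟨hb, hc⟩ | ⟨hc, hb⟩ <;> tauto
  have hcov : ∀ p q : ZMod n₁ × ZMod n₂, (G₁.boxProd G₂).Adj p q →
      (dirN G₁ G₂ stab).Adj p q ∨ (dirS G₁ G₂ stab).Adj p q ∨
      (dirE G₁ G₂ stab).Adj p q ∨ (dirW G₁ G₂ stab).Adj p q := by
    intro p q h
    rcases SimpleGraph.boxProd_adj.mp h with ⟨h1, he⟩ | ⟨h2, he⟩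
    · -- horizontal edge: E or W
      rcases hstabH p q he h1 with hp | hp
      · rcases le_or_gt (2 * (q.1 - p.1).val) n₁ with hl | hl
        · exact Or.inr (Or.inr (Or.inl ⟨h, he, Or.inl ⟨hp, hl⟩⟩))
        · exact Or.inr (Or.inr (Or.inr ⟨h, he, Or.inl ⟨hp, hl⟩⟩))
      · rcases le_or_gt (2 * (p.1 - q.1).val) n₁ with hl | hl
        · exact Or.inr (Or.inr (Or.inl ⟨h, he, Or.inr ⟨hp, hl⟩⟩))
        · exact Or.inr (Or.inr (Or.inr ⟨h, he, Or.inr ⟨hp, hl⟩⟩))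
    · -- vertical edge: N or S
      rcases hstabV p q he h2 with hp | hp
      · rcases le_or_gt (2 * (q.2 - p.2).val) n₂ with hl | hl
        · exact Or.inl ⟨h, he, Or.inl ⟨hp, hl⟩⟩
        · exact Or.inr (Or.inl ⟨h, he, Or.inl ⟨hp, hl⟩⟩)
      · rcases le_or_gt (2 * (p.2 - q.2).val) n₂ with hl | hl
        · exact Or.inl ⟨h, he, Or.inr ⟨hp, hl⟩⟩
        · exact Or.inr (Or.inl ⟨h, he, Or.inr ⟨hp, hl⟩⟩)
  -- lower bound
  have hdegle : ∀ v, @SimpleGraph.degree _ (G₁.boxProd G₂) v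
      (SimpleGraph.neighborSetFintype (G₁.boxProd G₂) v) ≤
      (dirN G₁ G₂ stab).degree v + (dirS G₁ G₂ stab).degree v +
      (dirE G₁ G₂ stab).degree v + (dirW G₁ G₂ stab).degree v := by
    intro v
    have hsub : @SimpleGraph.neighborFinset _ (G₁.boxProd G₂) v
        (SimpleGraph.neighborSetFintype (G₁.boxProd G₂) v) ⊆
        (dirN G₁ G₂ stab).neighborFinset v ∪ (dirS G₁ G₂ stab).neighborFinset v ∪
        (dirE G₁ G₂ stab).neighborFinset v ∪ (dirW G₁ G₂ stab).neighborFinset v := by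
      intro q hq
      rw [SimpleGraph.mem_neighborFinset] at hq
      simp only [Finset.mem_union, SimpleGraph.mem_neighborFinset]
      rcases hcov v q hq with h | h | h | h <;> tauto
    rw [SimpleGraph.degree, SimpleGraph.degree, SimpleGraph.degree, SimpleGraph.degree,
      SimpleGraph.degree]
    refine le_trans (Finset.card_le_card hsub) ?_
    refine le_trans (Finset.card_union_le _ _) ?_
    refine Nat.add_le_add_right ?_ _
    refine le_trans (Finset.card_union_le _ _) ?_
    exact Nat.add_le_add_right (Finset.card_union_le _ _) _
  constructor
  · obtain ⟨v, hv⟩ := (G₁.boxProd G₂).exists_maximal_degree_vertex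
    rw [hv]
    refine le_trans (hdegle v) ?_
    exact Nat.add_le_add (Nat.add_le_add (Nat.add_le_add
      (SimpleGraph.degree_le_maxDegree _ _) (SimpleGraph.degree_le_maxDegree _ _))
      (SimpleGraph.degree_le_maxDegree _ _)) (SimpleGraph.degree_le_maxDegree _ _)
  · -- upper bound
    have hN : (dirN G₁ G₂ stab).maxDegree ≤ G₂.maxDegree :=
      SimpleGraph.maxDegree_le_of_forall_degree_le _ _ fun v =>
        (degN_le stab v).trans (G₂.degree_le_maxDegree _)
    have hS : (dirS G₁ G₂ stab).maxDegree ≤ G₂.maxDegree :=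
      SimpleGraph.maxDegree_le_of_forall_degree_le _ _ fun v =>
        (degS_le stab v).trans (G₂.degree_le_maxDegree _)
    have hE : (dirE G₁ G₂ stab).maxDegree ≤ G₁.maxDegree :=
      SimpleGraph.maxDegree_le_of_forall_degree_le _ _ fun v =>
        (degE_le stab v).trans (G₁.degree_le_maxDegree _)
    have hW : (dirW G₁ G₂ stab).maxDegree ≤ G₁.maxDegree :=
      SimpleGraph.maxDegree_le_of_forall_degree_le _ _ fun v =>
        (degW_le stab v).trans (G₁.degree_le_maxDegree _)
    have hbig : G₁.maxDegree + G₂.maxDegree ≤ (G₁.boxProd G₂).maxDegree := by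
      obtain ⟨i, hi⟩ := G₁.exists_maximal_degree_vertex
      obtain ⟨j, hj⟩ := G₂.exists_maximal_degree_vertex
      have h := (G₁.boxProd G₂).degree_le_maxDegree (i, j)
      rwa [SimpleGraph.degree_boxProd, ← hi, ← hj] at h
    omega
end

section
/- Let G be a finite simple graph with vertex set ZMod n (n ≥ 1). For a vertex i, let δ₊(i) be the number of neighbors of i of the form i + ℓ (mod n) with 0 < ℓ ≤ n/2, and let δ₋(i) = deg(i) − δ₊(i). Suppose every vertex of G has even degree and the labeling is balanced, i.e., δ₊(i) − δ₋(i) equals deg(i) mod 2 for every vertex i. Let G₂ = G play the role of the second input graph in the directed-edge decomposition of the box product T = G₁ □ G₂ (with G₁ any finite simple bipartite graph on ZMod n₁ and G₂ bipartite with parts B₂, C₂). Then the maximum degrees of the vertical direction subgraphs satisfy deg(T_N) ≤ deg(G₂)/2 and deg(T_S) ≤ deg(G₂)/2; in particular deg(T_N) + deg(T_S) ≤ deg(G₂). -/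
open scoped Classical

section AuxLemmas

variable {n : ℕ} [NeZero n]

lemma zmod_val_sub_comm {a b : ZMod n} (h : a ≠ b) :
    (b - a).val = n - (a - b).val := by
  have h1 : a - b ≠ 0 := sub_ne_zero.mpr h
  have : NeZero (a - b) := ⟨h1⟩
  have h2 : b - a = -(a - b) := by ring
  rw [h2, ZMod.val_neg_of_ne_zero]

/-- Neighbors of `j` in the "N" direction. -/
noncomputable def Aset (G : SimpleGraph (ZMod n)) (j : ZMod n) : Finset (ZMod n) :=
  Finset.univ.filter fun j' => G.Adj j j' ∧ 2 * (j' - j).val ≤ n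

/-- Neighbors of `j` in the "S" direction. -/
noncomputable def Bset (G : SimpleGraph (ZMod n)) (j : ZMod n) : Finset (ZMod n) :=
  Finset.univ.filter fun j' => G.Adj j j' ∧ n < 2 * (j' - j).val

lemma deltaPlus_eq_Aset_card (G : SimpleGraph (ZMod n)) (j : ZMod n) :
    deltaPlus G j = (Aset G j).card := by
  rw [deltaPlus]
  have hset : {j' | G.Adj j j' ∧ 0 < (j' - j).val ∧ 2 * (j' - j).val ≤ n}
      = ↑(Aset G j) := by
    ext j'
    simp only [Set.mem_setOf_eq, Aset, Finset.coe_filter, Finset.mem_univ, true_and]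
    constructor
    · rintro ⟨h1, _, h3⟩; exact ⟨h1, h3⟩
    · rintro ⟨h1, h3⟩
      exact ⟨h1, ZMod.val_pos.mpr (sub_ne_zero.mpr (G.ne_of_adj h1).symm), h3⟩
  rw [hset, Set.ncard_coe_finset]

lemma degree_split (G : SimpleGraph (ZMod n)) (j : ZMod n) :
    G.degree j = (Aset G j).card + (Bset G j).card := by
  classical
  have hA : Aset G j = (G.neighborFinset j).filter (fun j' => 2 * (j' - j).val ≤ n) := by
    ext j'; simp [Aset, SimpleGraph.mem_neighborFinset]
  have hB : Bset G j
      = (G.neighborFinset j).filter (fun j' => ¬ (2 * (j' - j).val ≤ n)) := by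
    ext j'; simp [Bset, SimpleGraph.mem_neighborFinset, not_le]
  have := Finset.card_filter_add_card_filter_not
    (s := G.neighborFinset j) (p := fun j' => 2 * (j' - j).val ≤ n)
  rw [← hA, ← hB] at this
  rw [← SimpleGraph.card_neighborFinset_eq_degree, ← this]

lemma Aset_card_half (G : SimpleGraph (ZMod n)) (j : ZMod n)
    (heven : Even (G.degree j))
    (hbal : (deltaPlus G j : ℤ) - (deltaMinus G j : ℤ) = (G.degree j : ℤ) % 2) :
    2 * (Aset G j).card = G.degree j := by
  have hsplit := degree_split G j
  have hd := deltaPlus_eq_Aset_card G j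
  rw [deltaMinus, hd] at hbal
  obtain ⟨k, hk⟩ := heven
  omega

lemma Bset_card_eq (G : SimpleGraph (ZMod n)) (j : ZMod n)
    (heven : Even (G.degree j))
    (hbal : (deltaPlus G j : ℤ) - (deltaMinus G j : ℤ) = (G.degree j : ℤ) % 2) :
    (Bset G j).card = (Aset G j).card := by
  have h1 := Aset_card_half G j heven hbal
  have h2 := degree_split G j
  omega

/-- The balance condition globally rules out edges of length exactly `n / 2`. -/
lemma no_mid_edge (G : SimpleGraph (ZMod n))
    (heven : ∀ j, Even (G.degree j))
    (hbal : ∀ j, (deltaPlus G j : ℤ) - (deltaMinus G j : ℤ) = (G.degree j : ℤ) % 2) :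
    ∀ j j', G.Adj j j' → 2 * (j' - j).val ≠ n := by
  classical
  set pairA : Finset (ZMod n × ZMod n) :=
    Finset.univ.filter fun p => G.Adj p.1 p.2 ∧ 2 * (p.2 - p.1).val ≤ n with hpairA
  set pairB : Finset (ZMod n × ZMod n) :=
    Finset.univ.filter fun p => G.Adj p.1 p.2 ∧ n < 2 * (p.2 - p.1).val with hpairB
  set pairBM : Finset (ZMod n × ZMod n) :=
    Finset.univ.filter fun p => G.Adj p.1 p.2 ∧ n ≤ 2 * (p.2 - p.1).val with hpairBM
  set pairM : Finset (ZMod n × ZMod n) :=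
    Finset.univ.filter fun p => G.Adj p.1 p.2 ∧ 2 * (p.2 - p.1).val = n with hpairM
  -- fiberwise counts
  have fibA : pairA.card = ∑ j : ZMod n, (Aset G j).card := by
    rw [Finset.card_eq_sum_card_fiberwise
      (f := Prod.fst) (t := Finset.univ) (fun x _ => Finset.mem_univ _)]
    refine Finset.sum_congr rfl fun j _ => ?_
    refine Finset.card_bij' (fun p _ => p.2) (fun j' _ => (j, j')) ?_ ?_ ?_ ?_
    · intro p hp
      simp only [hpairA, Finset.mem_filter, Finset.mem_univ, true_and] at hp
      obtain ⟨⟨h1, h2⟩, h3⟩ := hp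
      subst h3
      simp [Aset, h1, h2]
    · intro j' hj'
      simp only [Aset, Finset.mem_filter, Finset.mem_univ, true_and] at hj'
      simp [hpairA, hj'.1, hj'.2]
    · intro p hp
      simp only [hpairA, Finset.mem_filter, Finset.mem_univ, true_and] at hp
      show (j, p.2) = p
      conv_rhs => rw [← Prod.mk.eta (p := p)]
      rw [hp.2]
    · intro j' _; rfl
  have fibB : pairB.card = ∑ j : ZMod n, (Bset G j).card := by
    rw [Finset.card_eq_sum_card_fiberwise
      (f := Prod.fst) (t := Finset.univ) (fun x _ => Finset.mem_univ _)]
    refine Finset.sum_congr rfl fun j _ => ?_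
    refine Finset.card_bij' (fun p _ => p.2) (fun j' _ => (j, j')) ?_ ?_ ?_ ?_
    · intro p hp
      simp only [hpairB, Finset.mem_filter, Finset.mem_univ, true_and] at hp
      obtain ⟨⟨h1, h2⟩, h3⟩ := hp
      subst h3
      simp [Bset, h1, h2]
    · intro j' hj'
      simp only [Bset, Finset.mem_filter, Finset.mem_univ, true_and] at hj'
      simp [hpairB, hj'.1, hj'.2]
    · intro p hp
      simp only [hpairB, Finset.mem_filter, Finset.mem_univ, true_and] at hp
      show (j, p.2) = p
      conv_rhs => rw [← Prod.mk.eta (p := p)]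
      rw [hp.2]
    · intro j' _; rfl
  -- swap bijection
  have hswap : pairA.card = pairBM.card := by
    refine Finset.card_bij' (fun p _ => p.swap) (fun p _ => p.swap) ?_ ?_ ?_ ?_
    · intro p hp
      simp only [hpairA, Finset.mem_filter, Finset.mem_univ, true_and] at hp
      obtain ⟨h1, h2⟩ := hp
      have hne : p.1 ≠ p.2 := G.ne_of_adj h1
      have hv : (p.1 - p.2).val = n - (p.2 - p.1).val := zmod_val_sub_comm hne.symm
      have hlt : (p.2 - p.1).val < n := ZMod.val_lt _
      simp only [hpairBM, Finset.mem_filter, Finset.mem_univ, true_and, Prod.swap]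
      exact ⟨h1.symm, by omega⟩
    · intro p hp
      simp only [hpairBM, Finset.mem_filter, Finset.mem_univ, true_and] at hp
      obtain ⟨h1, h2⟩ := hp
      have hne : p.1 ≠ p.2 := G.ne_of_adj h1
      have hv : (p.1 - p.2).val = n - (p.2 - p.1).val := zmod_val_sub_comm hne.symm
      have hpos : 0 < (p.2 - p.1).val :=
        ZMod.val_pos.mpr (sub_ne_zero.mpr hne.symm)
      simp only [hpairA, Finset.mem_filter, Finset.mem_univ, true_and, Prod.swap]
      exact ⟨h1.symm, by omega⟩
    · intro p _; exact Prod.swap_swap p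
    · intro p _; exact Prod.swap_swap p
  -- splitting BM into B and M
  have hBM : pairBM.card = pairM.card + pairB.card := by
    have := Finset.card_filter_add_card_filter_not
      (s := pairBM) (p := fun p => 2 * (p.2 - p.1).val = n)
    have hMeq : pairBM.filter (fun p => 2 * (p.2 - p.1).val = n) = pairM := by
      ext p
      simp only [hpairBM, hpairM, Finset.mem_filter, Finset.mem_univ, true_and]
      constructor
      · rintro ⟨⟨h1, _⟩, h3⟩; exact ⟨h1, h3⟩
      · rintro ⟨h1, h3⟩; exact ⟨⟨h1, by omega⟩, h3⟩
    have hBeq : pairBM.filter (fun p => ¬ (2 * (p.2 - p.1).val = n)) = pairB := by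
      ext p
      simp only [hpairBM, hpairB, Finset.mem_filter, Finset.mem_univ, true_and]
      constructor
      · rintro ⟨⟨h1, h2⟩, h3⟩; exact ⟨h1, by omega⟩
      · rintro ⟨h1, h3⟩; exact ⟨⟨h1, by omega⟩, by omega⟩
    rw [hMeq, hBeq] at this
    omega
  -- per-vertex equality of sums
  have hsum : pairA.card = pairB.card := by
    rw [fibA, fibB]
    exact Finset.sum_congr rfl fun j _ => (Bset_card_eq G j (heven j) (hbal j)).symm
  have hM0 : pairM.card = 0 := by omega
  intro j j' hadj hmid
  have hmem : (j, j') ∈ pairM := by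
    simp [hpairM, hadj, hmid]
  rw [Finset.card_eq_zero] at hM0
  rw [hM0] at hmem
  exact absurd hmem (Finset.notMem_empty _)

/-- Exactly one endpoint of a vertical edge is a stabilizer vertex. -/
lemma oneStab {n₁ n₂ : ℕ} {B₁ C₁ : Set (ZMod n₁)} {B₂ C₂ : Set (ZMod n₂)}
    (hcover₁ : B₁ ∪ C₁ = Set.univ) (hdisj₁ : Disjoint B₁ C₁) (hdisj₂ : Disjoint B₂ C₂)
    {i : ZMod n₁} {j j' : ZMod n₂}
    (hjj : (j ∈ B₂ ∧ j' ∈ C₂) ∨ (j ∈ C₂ ∧ j' ∈ B₂)) :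
    ((i, j) ∈ stabSet B₁ C₁ B₂ C₂ ↔ (i, j') ∉ stabSet B₁ C₁ B₂ C₂) := by
  have hi : i ∈ B₁ ∨ i ∈ C₁ := by
    rw [← Set.mem_union, hcover₁]; trivial
  have hd1 : ∀ a, a ∈ B₁ → a ∉ C₁ := fun a ha => Set.disjoint_left.mp hdisj₁ ha
  have hd2 : ∀ a, a ∈ B₂ → a ∉ C₂ := fun a ha => Set.disjoint_left.mp hdisj₂ ha
  simp only [stabSet, Set.mem_union, Set.mem_prod]
  rcases hi with hi | hi <;> rcases hjj with ⟨h1, h2⟩ | ⟨h1, h2⟩ <;>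
    [skip; skip; skip; skip] <;>
    first
      | (first
          | (have := hd1 i hi; have := hd2 j h1; have := hd2 j' h2; tauto)
          | (have := hd1 i hi; have := hd2 j' h2; have := hd2 j h1; tauto))
      | tauto

/-- Bounding degree via an injection of neighbors into a finset of second coordinates. -/
lemma degree_le_card {n₁ n₂ : ℕ} [NeZero n₁] [NeZero n₂]
    (H : SimpleGraph (ZMod n₁ × ZMod n₂))
    (p : ZMod n₁ × ZMod n₂) (s : Finset (ZMod n₂))
    (h : ∀ q, H.Adj p q → q.1 = p.1 ∧ q.2 ∈ s) :
    H.degree p ≤ s.card := by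
  classical
  show (H.neighborFinset p).card ≤ s.card
  apply Finset.card_le_card_of_injOn (fun q => q.2)
  · intro q hq
    exact (h q ((SimpleGraph.mem_neighborFinset _ _ _).mp hq)).2
  · intro q hq q' hq' heq
    have h1 := (h q ((SimpleGraph.mem_neighborFinset _ _ _).mp hq)).1
    have h2 := (h q' ((SimpleGraph.mem_neighborFinset _ _ _).mp hq')).1
    exact Prod.ext_iff.mpr ⟨h1.trans h2.symm, heq⟩

end AuxLemmas

/-- If every vertex of `G₂` has even degree and the labeling of `G₂` by
`ZMod n₂` is balanced (`δ₊(j) − δ₋(j) = deg(j) mod 2` for every vertex `j`), then the vertical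
direction subgraphs of `T = G₁ □ G₂` satisfy `deg(T_N) ≤ deg(G₂)/2` and `deg(T_S) ≤ deg(G₂)/2`;
in particular `deg(T_N) + deg(T_S) ≤ deg(G₂)`. -/
theorem vertical_direction_maxDegree_bound {n₁ n₂ : ℕ} [NeZero n₁] [NeZero n₂]
    (G₁ : SimpleGraph (ZMod n₁)) (G₂ : SimpleGraph (ZMod n₂))
    (B₁ C₁ : Set (ZMod n₁)) (B₂ C₂ : Set (ZMod n₂))
    (hcover₁ : B₁ ∪ C₁ = Set.univ) (hdisj₁ : Disjoint B₁ C₁)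
    (hcover₂ : B₂ ∪ C₂ = Set.univ) (hdisj₂ : Disjoint B₂ C₂)
    (hbip₁ : ∀ u v, G₁.Adj u v → (u ∈ B₁ ∧ v ∈ C₁) ∨ (u ∈ C₁ ∧ v ∈ B₁))
    (hbip₂ : ∀ u v, G₂.Adj u v → (u ∈ B₂ ∧ v ∈ C₂) ∨ (u ∈ C₂ ∧ v ∈ B₂))
    (heven : ∀ j : ZMod n₂, Even (G₂.degree j))
    (hbal : ∀ j : ZMod n₂,
      (deltaPlus G₂ j : ℤ) - (deltaMinus G₂ j : ℤ) = (G₂.degree j : ℤ) % 2) :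
    (dirN G₁ G₂ (stabSet B₁ C₁ B₂ C₂)).maxDegree ≤ G₂.maxDegree / 2 ∧
    (dirS G₁ G₂ (stabSet B₁ C₁ B₂ C₂)).maxDegree ≤ G₂.maxDegree / 2 ∧
    (dirN G₁ G₂ (stabSet B₁ C₁ B₂ C₂)).maxDegree +
        (dirS G₁ G₂ (stabSet B₁ C₁ B₂ C₂)).maxDegree ≤ G₂.maxDegree := by
  classical
  set stab := stabSet B₁ C₁ B₂ C₂ with hstab
  have key := no_mid_edge G₂ heven hbal
  have halfA : ∀ j, (Aset G₂ j).card = G₂.degree j / 2 := by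
    intro j; have := Aset_card_half G₂ j (heven j) (hbal j); omega
  have halfB : ∀ j, (Bset G₂ j).card = G₂.degree j / 2 := by
    intro j
    have h1 := Aset_card_half G₂ j (heven j) (hbal j)
    have h2 := Bset_card_eq G₂ j (heven j) (hbal j)
    omega
  -- basic facts about adjacency in the direction subgraphs
  have hvert : ∀ (p q : ZMod n₁ × ZMod n₂), (G₁.boxProd G₂).Adj p q → p.1 = q.1 →
      G₂.Adj p.2 q.2 := by
    intro p q hadj h1
    rcases (SimpleGraph.boxProd_adj).mp hadj with ⟨h, _⟩ | ⟨h, _⟩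
    · rw [h1] at h; exact absurd h (G₁.loopless.irrefl q.1)
    · exact h
  have hone : ∀ (p q : ZMod n₁ × ZMod n₂), p.1 = q.1 → G₂.Adj p.2 q.2 →
      (p ∈ stab ↔ q ∉ stab) := by
    intro p q h1 h2
    have this1 := oneStab (i := p.1) hcover₁ hdisj₁ hdisj₂ (hbip₂ p.2 q.2 h2)
    have h3 : (p.1, q.2) = q := by rw [h1]
    rw [← h3]
    exact this1
  -- value arithmetic for reversing edge directions
  have hval : ∀ (a b : ZMod n₂), G₂.Adj a b →
      ((b - a).val = n₂ - (a - b).val ∧ 0 < (a - b).val ∧ (a - b).val < n₂ ∧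
        2 * (a - b).val ≠ n₂ ∧ 2 * (b - a).val ≠ n₂) := by
    intro a b hadj
    have hne : a ≠ b := G₂.ne_of_adj hadj
    refine ⟨zmod_val_sub_comm hne, ZMod.val_pos.mpr (sub_ne_zero.mpr hne),
      ZMod.val_lt _, key b a hadj.symm, key a b hadj⟩
  -- degree bounds for dirN
  have hN : ∀ p, (dirN G₁ G₂ stab).degree p ≤ G₂.degree p.2 / 2 := by
    intro p
    by_cases hp : p ∈ stab
    · refine le_of_le_of_eq (degree_le_card _ p (Aset G₂ p.2) ?_) (halfA p.2)
      rintro q (⟨h1, h2, h3⟩ : _ ∧ _ ∧ _)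
      have hadj := hvert p q h1 h2
      have hq : q ∉ stab := (hone p q h2 hadj).mp hp
      rcases h3 with ⟨_, h3⟩ | ⟨h3, _⟩
      · exact ⟨h2.symm, by simp [Aset, hadj, h3]⟩
      · exact absurd h3 hq
    · refine le_of_le_of_eq (degree_le_card _ p (Bset G₂ p.2) ?_) (halfB p.2)
      rintro q (⟨h1, h2, h3⟩ : _ ∧ _ ∧ _)
      have hadj := hvert p q h1 h2
      rcases h3 with ⟨h3, _⟩ | ⟨_, h3⟩
      · exact absurd h3 hp
      · obtain ⟨hv, hpos, hlt, hne1, hne2⟩ := hval p.2 q.2 hadj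
        have : n₂ < 2 * (q.2 - p.2).val := by omega
        exact ⟨h2.symm, by simp [Bset, hadj, this]⟩
  -- degree bounds for dirS
  have hS : ∀ p, (dirS G₁ G₂ stab).degree p ≤ G₂.degree p.2 / 2 := by
    intro p
    by_cases hp : p ∈ stab
    · refine le_of_le_of_eq (degree_le_card _ p (Bset G₂ p.2) ?_) (halfB p.2)
      rintro q (⟨h1, h2, h3⟩ : _ ∧ _ ∧ _)
      have hadj := hvert p q h1 h2
      have hq : q ∉ stab := (hone p q h2 hadj).mp hp
      rcases h3 with ⟨_, h3⟩ | ⟨h3, _⟩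
      · exact ⟨h2.symm, by simp [Bset, hadj, h3]⟩
      · exact absurd h3 hq
    · refine le_of_le_of_eq (degree_le_card _ p (Aset G₂ p.2) ?_) (halfA p.2)
      rintro q (⟨h1, h2, h3⟩ : _ ∧ _ ∧ _)
      have hadj := hvert p q h1 h2
      rcases h3 with ⟨h3, _⟩ | ⟨_, h3⟩
      · exact absurd h3 hp
      · obtain ⟨hv, hpos, hlt, hne1, hne2⟩ := hval p.2 q.2 hadj
        have : 2 * (q.2 - p.2).val ≤ n₂ := by omega
        exact ⟨h2.symm, by simp [Aset, hadj, this]⟩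
  have hmaxN : (dirN G₁ G₂ stab).maxDegree ≤ G₂.maxDegree / 2 := by
    apply SimpleGraph.maxDegree_le_of_forall_degree_le
    intro p
    exact le_trans (hN p) (Nat.div_le_div_right (G₂.degree_le_maxDegree p.2))
  have hmaxS : (dirS G₁ G₂ stab).maxDegree ≤ G₂.maxDegree / 2 := by
    apply SimpleGraph.maxDegree_le_of_forall_degree_le
    intro p
    exact le_trans (hS p) (Nat.div_le_div_right (G₂.degree_le_maxDegree p.2))
  exact ⟨hmaxN, hmaxS, by omega⟩
end

section
/- Let G₁ and G₂ be finite simple bipartite graphs on vertex sets ZMod n₁ and ZMod n₂ (n₁, n₂ ≥ 1) with bipartitions B₁ ∪ C₁ and B₂ ∪ C₂. Suppose every vertex of G₁ and every vertex of G₂ has even degree, and both labelings are balanced: for every vertex i of G_m, δ₊(G_m, i) − δ₋(G_m, i) equals deg(i) mod 2, where δ₊(G_m, i) is the number of neighbors of i of the form i + ℓ (mod n_m) with 0 < ℓ ≤ n_m/2 and δ₋(G_m, i) = deg(i) − δ₊(G_m, i). Let T = G₁ □ G₂ with directed-edge spanning subgraphs T_N, T_S, T_E, T_W. Then deg(T_N)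 + deg(T_S) + deg(T_E) + deg(T_W) = deg(T) = deg(G₁) + deg(G₂), where deg(·) denotes maximum degree. -/
open scoped Classical

section Aux

open Finset

lemma dirN_adj {n₁ n₂ : ℕ} (G₁ : SimpleGraph (ZMod n₁)) (G₂ : SimpleGraph (ZMod n₂))
    (stab : Set (ZMod n₁ × ZMod n₂)) (p q : ZMod n₁ × ZMod n₂) :
    (dirN G₁ G₂ stab).Adj p q ↔ ((G₁.boxProd G₂).Adj p q ∧ p.1 = q.1 ∧
      ((p ∈ stab ∧ 2 * (q.2 - p.2).val ≤ n₂) ∨ (q ∈ stab ∧ 2 * (p.2 - q.2).val ≤ n₂))) :=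
  Iff.rfl

lemma dirS_adj {n₁ n₂ : ℕ} (G₁ : SimpleGraph (ZMod n₁)) (G₂ : SimpleGraph (ZMod n₂))
    (stab : Set (ZMod n₁ × ZMod n₂)) (p q : ZMod n₁ × ZMod n₂) :
    (dirS G₁ G₂ stab).Adj p q ↔ ((G₁.boxProd G₂).Adj p q ∧ p.1 = q.1 ∧
      ((p ∈ stab ∧ n₂ < 2 * (q.2 - p.2).val) ∨ (q ∈ stab ∧ n₂ < 2 * (p.2 - q.2).val))) :=
  Iff.rfl

lemma dirE_adj {n₁ n₂ : ℕ} (G₁ : SimpleGraph (ZMod n₁)) (G₂ : SimpleGraph (ZMod n₂))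
    (stab : Set (ZMod n₁ × ZMod n₂)) (p q : ZMod n₁ × ZMod n₂) :
    (dirE G₁ G₂ stab).Adj p q ↔ ((G₁.boxProd G₂).Adj p q ∧ p.2 = q.2 ∧
      ((p ∈ stab ∧ 2 * (q.1 - p.1).val ≤ n₁) ∨ (q ∈ stab ∧ 2 * (p.1 - q.1).val ≤ n₁))) :=
  Iff.rfl

lemma dirW_adj {n₁ n₂ : ℕ} (G₁ : SimpleGraph (ZMod n₁)) (G₂ : SimpleGraph (ZMod n₂))
    (stab : Set (ZMod n₁ × ZMod n₂)) (p q : ZMod n₁ × ZMod n₂) :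
    (dirW G₁ G₂ stab).Adj p q ↔ ((G₁.boxProd G₂).Adj p q ∧ p.2 = q.2 ∧
      ((p ∈ stab ∧ n₁ < 2 * (q.1 - p.1).val) ∨ (q ∈ stab ∧ n₁ < 2 * (p.1 - q.1).val))) :=
  Iff.rfl

variable {n : ℕ} [NeZero n]

lemma val_pos_of_adj {G : SimpleGraph (ZMod n)} {j j' : ZMod n} (h : G.Adj j j') :
    0 < (j' - j).val := by
  rcases Nat.eq_zero_or_pos (j' - j).val with h0 | h0
  · exact absurd (sub_eq_zero.mp ((ZMod.val_eq_zero _).mp h0)) h.ne'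
  · exact h0

lemma val_sub_rev {j j' : ZMod n} (h : j ≠ j') :
    (j - j').val = n - (j' - j).val := by
  have hr : j - j' = -(j' - j) := by ring
  rw [hr]
  haveI : NeZero (j' - j) := ⟨sub_ne_zero.mpr (Ne.symm h)⟩
  exact ZMod.val_neg_of_ne_zero _

lemma deltaPlus_eq_card (G : SimpleGraph (ZMod n)) (j : ZMod n) :
    deltaPlus G j = (univ.filter fun j' => G.Adj j j' ∧ 2 * (j' - j).val ≤ n).card := by
  rw [deltaPlus, ← Set.ncard_coe_finset]
  congr 1
  ext j'
  simp only [coe_filter, Set.mem_setOf_eq, mem_univ, true_and]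
  exact ⟨fun ⟨h1, _, h3⟩ => ⟨h1, h3⟩, fun ⟨h1, h3⟩ => ⟨h1, val_pos_of_adj h1, h3⟩⟩

lemma card_split (G : SimpleGraph (ZMod n)) (j : ZMod n) :
    (univ.filter fun j' => G.Adj j j' ∧ 2 * (j' - j).val ≤ n).card +
      (univ.filter fun j' => G.Adj j j' ∧ n < 2 * (j' - j).val).card = G.degree j := by
  classical
  have h := Finset.card_filter_add_card_filter_not
      (s := Finset.univ.filter fun j' => G.Adj j j') (p := fun j' => 2 * (j' - j).val ≤ n)
  simp only [Finset.filter_filter, not_le] at h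
  rw [← SimpleGraph.card_neighborFinset_eq_degree, SimpleGraph.neighborFinset_eq_filter]
  convert h using 2

lemma two_deltaPlus (G : SimpleGraph (ZMod n)) (heven : ∀ j, Even (G.degree j))
    (hbal : ∀ j, (deltaPlus G j : ℤ) - (deltaMinus G j : ℤ) = (G.degree j : ℤ) % 2)
    (j : ZMod n) : 2 * deltaPlus G j = G.degree j := by
  have hle : deltaPlus G j ≤ G.degree j := by
    rw [deltaPlus_eq_card]
    have := card_split G j
    omega
  have hb := hbal j
  rw [deltaMinus, Nat.cast_sub hle] at hb
  have hmod : G.degree j % 2 = 0 := Nat.even_iff.mp (heven j)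
  omega

lemma no_antipodal (G : SimpleGraph (ZMod n)) (heven : ∀ j, Even (G.degree j))
    (hbal : ∀ j, (deltaPlus G j : ℤ) - (deltaMinus G j : ℤ) = (G.degree j : ℤ) % 2) :
    ∀ j j' : ZMod n, G.Adj j j' → 2 * (j' - j).val ≠ n := by
  classical
  have key : ∀ j, (univ.filter fun j' => G.Adj j j' ∧ 2 * (j' - j).val ≤ n).card
      = (univ.filter fun j' => G.Adj j j' ∧ n < 2 * (j' - j).val).card := by
    intro j
    have h1 := card_split G j
    have h2 := two_deltaPlus G heven hbal j
    rw [deltaPlus_eq_card] at h2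
    omega
  have hsum : ∑ j : ZMod n, ∑ j' : ZMod n,
        (if G.Adj j j' ∧ 2 * (j' - j).val ≤ n then (1:ℕ) else 0)
      = ∑ j : ZMod n, ∑ j' : ZMod n,
        (if G.Adj j j' ∧ 2 * (j' - j).val < n then (1:ℕ) else 0) := by
    calc ∑ j : ZMod n, ∑ j' : ZMod n,
            (if G.Adj j j' ∧ 2 * (j' - j).val ≤ n then (1:ℕ) else 0)
        = ∑ j : ZMod n, ∑ j' : ZMod n,
            (if G.Adj j j' ∧ n < 2 * (j' - j).val then (1:ℕ) else 0) := by
          refine Finset.sum_congr rfl fun j _ => ?_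
          rw [← Finset.card_filter, ← Finset.card_filter]
          exact key j
      _ = ∑ j' : ZMod n, ∑ j : ZMod n,
            (if G.Adj j j' ∧ n < 2 * (j' - j).val then (1:ℕ) else 0) := Finset.sum_comm
      _ = ∑ j : ZMod n, ∑ j' : ZMod n,
            (if G.Adj j j' ∧ 2 * (j' - j).val < n then (1:ℕ) else 0) := by
          refine Finset.sum_congr rfl fun j _ => Finset.sum_congr rfl fun j' _ => ?_
          by_cases hadj : G.Adj j j'
          · have hv : (j - j').val = n - (j' - j).val := val_sub_rev hadj.ne
            have hp := val_pos_of_adj hadj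
            have hl := ZMod.val_lt (j' - j)
            have hiff : (G.Adj j' j ∧ n < 2 * (j - j').val) ↔
                (G.Adj j j' ∧ 2 * (j' - j).val < n) := by
              constructor
              · rintro ⟨h, hlt⟩; exact ⟨h.symm, by omega⟩
              · rintro ⟨h, hlt⟩; exact ⟨h.symm, by omega⟩
            rw [if_congr hiff rfl rfl]
          · rw [if_neg (fun h => hadj h.1.symm), if_neg (fun h => hadj h.1)]
  have hsplit : ∀ j j' : ZMod n,
      (if G.Adj j j' ∧ 2 * (j' - j).val ≤ n then (1:ℕ) else 0)
      = (if G.Adj j j' ∧ 2 * (j' - j).val < n then (1:ℕ) else 0)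
        + (if G.Adj j j' ∧ 2 * (j' - j).val = n then (1:ℕ) else 0) := by
    intro j j'
    by_cases hadj : G.Adj j j'
    · simp only [hadj, true_and]
      split_ifs <;> omega
    · simp [hadj]
  have hzero : ∑ j : ZMod n, ∑ j' : ZMod n,
      (if G.Adj j j' ∧ 2 * (j' - j).val = n then (1:ℕ) else 0) = 0 := by
    have h1 : ∑ j : ZMod n, ∑ j' : ZMod n,
          (if G.Adj j j' ∧ 2 * (j' - j).val ≤ n then (1:ℕ) else 0)
        = (∑ j : ZMod n, ∑ j' : ZMod n,
            (if G.Adj j j' ∧ 2 * (j' - j).val < n then (1:ℕ) else 0))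
          + ∑ j : ZMod n, ∑ j' : ZMod n,
            (if G.Adj j j' ∧ 2 * (j' - j).val = n then (1:ℕ) else 0) := by
      simp_rw [hsplit]
      rw [← Finset.sum_add_distrib]
      exact Finset.sum_congr rfl fun j _ => Finset.sum_add_distrib
    omega
  intro j j' hadj heq
  have hz1 := (Finset.sum_eq_zero_iff.mp hzero) j (Finset.mem_univ j)
  have hz2 := (Finset.sum_eq_zero_iff.mp hz1) j' (Finset.mem_univ j')
  rw [if_pos ⟨hadj, heq⟩] at hz2
  exact one_ne_zero hz2


section Dir

open Finset

variable {n₁ n₂ : ℕ} [NeZero n₁] [NeZero n₂]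
variable (G₁ : SimpleGraph (ZMod n₁)) (G₂ : SimpleGraph (ZMod n₂))
variable (stab : Set (ZMod n₁ × ZMod n₂))

lemma dirN_twice_degree
    (hst : ∀ (i : ZMod n₁) (j j' : ZMod n₂), G₂.Adj j j' → ((i, j) ∈ stab ↔ (i, j') ∉ stab))
    (hna : ∀ j j' : ZMod n₂, G₂.Adj j j' → 2 * (j' - j).val ≠ n₂)
    (h2 : ∀ j, 2 * deltaPlus G₂ j = G₂.degree j)
    (p : ZMod n₁ × ZMod n₂) :
    2 * (dirN G₁ G₂ stab).degree p = G₂.degree p.2 := by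
  classical
  obtain ⟨i, j⟩ := p
  show 2 * (dirN G₁ G₂ stab).degree (i, j) = G₂.degree j
  have hinj : Function.Injective (fun j' : ZMod n₂ => (i, j')) :=
    fun a b h => congrArg Prod.snd h
  by_cases hp : (i, j) ∈ stab
  · have hnb : (dirN G₁ G₂ stab).neighborFinset (i, j)
        = (Finset.univ.filter fun j' => G₂.Adj j j' ∧ 2 * (j' - j).val ≤ n₂).image
            (fun j' => (i, j')) := by
      ext q
      obtain ⟨a, b⟩ := q
      simp only [SimpleGraph.mem_neighborFinset, dirN_adj, Finset.mem_image,
        Finset.mem_filter, Finset.mem_univ, true_and]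
      constructor
      · rintro ⟨hbox, h1, hd⟩
        have h1' : i = a := h1
        subst h1'
        have hadj : G₂.Adj j b := by
          rcases SimpleGraph.boxProd_adj.mp hbox with ⟨ha, _⟩ | ⟨ha, _⟩
          · exact absurd ha (G₁.loopless.irrefl i)
          · exact ha
        have hq : (i, b) ∉ stab := (hst i j b hadj).mp hp
        rcases hd with ⟨_, hb⟩ | ⟨hq', _⟩
        · exact ⟨b, ⟨hadj, hb⟩, rfl⟩
        · exact absurd hq' hq
      · rintro ⟨j', ⟨hadj, hb⟩, hEq⟩
        rw [Prod.mk.injEq] at hEq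
        obtain ⟨rfl, rfl⟩ := hEq
        exact ⟨SimpleGraph.boxProd_adj.mpr (Or.inr ⟨hadj, rfl⟩), rfl, Or.inl ⟨hp, hb⟩⟩
    rw [← SimpleGraph.card_neighborFinset_eq_degree, hnb,
      Finset.card_image_of_injective _ hinj, ← deltaPlus_eq_card]
    exact h2 j
  · have hnb : (dirN G₁ G₂ stab).neighborFinset (i, j)
        = (Finset.univ.filter fun j' => G₂.Adj j j' ∧ 2 * (j - j').val ≤ n₂).image
            (fun j' => (i, j')) := by
      ext q
      obtain ⟨a, b⟩ := q
      simp only [SimpleGraph.mem_neighborFinset, dirN_adj, Finset.mem_image,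
        Finset.mem_filter, Finset.mem_univ, true_and]
      constructor
      · rintro ⟨hbox, h1, hd⟩
        have h1' : i = a := h1
        subst h1'
        have hadj : G₂.Adj j b := by
          rcases SimpleGraph.boxProd_adj.mp hbox with ⟨ha, _⟩ | ⟨ha, _⟩
          · exact absurd ha (G₁.loopless.irrefl i)
          · exact ha
        rcases hd with ⟨hp', _⟩ | ⟨_, hb⟩
        · exact absurd hp' hp
        · exact ⟨b, ⟨hadj, hb⟩, rfl⟩
      · rintro ⟨j', ⟨hadj, hb⟩, hEq⟩
        rw [Prod.mk.injEq] at hEq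
        obtain ⟨rfl, rfl⟩ := hEq
        have hq : (i, j') ∈ stab := by
          by_contra h
          exact hp ((hst i j j' hadj).mpr h)
        exact ⟨SimpleGraph.boxProd_adj.mpr (Or.inr ⟨hadj, rfl⟩), rfl, Or.inr ⟨hq, hb⟩⟩
    have hfe : (Finset.univ.filter fun j' => G₂.Adj j j' ∧ 2 * (j - j').val ≤ n₂)
        = (Finset.univ.filter fun j' => G₂.Adj j j' ∧ n₂ < 2 * (j' - j).val) := by
      apply Finset.filter_congr
      intro j' _
      by_cases hadj : G₂.Adj j j'
      · have hv : (j - j').val = n₂ - (j' - j).val := val_sub_rev hadj.ne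
        have hpos := val_pos_of_adj hadj
        have hlt := ZMod.val_lt (j' - j)
        have hne := hna j j' hadj
        simp only [hadj, true_and]
        constructor <;> intro h <;> omega
      · simp [hadj]
    rw [← SimpleGraph.card_neighborFinset_eq_degree, hnb,
      Finset.card_image_of_injective _ hinj, hfe]
    have hs := card_split G₂ j
    have hd := h2 j
    rw [deltaPlus_eq_card] at hd
    omega


lemma dirS_twice_degree
    (hst : ∀ (i : ZMod n₁) (j j' : ZMod n₂), G₂.Adj j j' → ((i, j) ∈ stab ↔ (i, j') ∉ stab))
    (hna : ∀ j j' : ZMod n₂, G₂.Adj j j' → 2 * (j' - j).val ≠ n₂)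
    (h2 : ∀ j, 2 * deltaPlus G₂ j = G₂.degree j)
    (p : ZMod n₁ × ZMod n₂) :
    2 * (dirS G₁ G₂ stab).degree p = G₂.degree p.2 := by
  classical
  obtain ⟨i, j⟩ := p
  show 2 * (dirS G₁ G₂ stab).degree (i, j) = G₂.degree j
  have hinj : Function.Injective (fun j' : ZMod n₂ => (i, j')) :=
    fun a b h => congrArg Prod.snd h
  by_cases hp : (i, j) ∈ stab
  · have hnb : (dirS G₁ G₂ stab).neighborFinset (i, j)
        = (Finset.univ.filter fun j' => G₂.Adj j j' ∧ n₂ < 2 * (j' - j).val).image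
            (fun j' => (i, j')) := by
      ext q
      obtain ⟨a, b⟩ := q
      simp only [SimpleGraph.mem_neighborFinset, dirS_adj, Finset.mem_image,
        Finset.mem_filter, Finset.mem_univ, true_and]
      constructor
      · rintro ⟨hbox, h1, hd⟩
        have h1' : i = a := h1
        subst h1'
        have hadj : G₂.Adj j b := by
          rcases SimpleGraph.boxProd_adj.mp hbox with ⟨ha, _⟩ | ⟨ha, _⟩
          · exact absurd ha (G₁.loopless.irrefl i)
          · exact ha
        have hq : (i, b) ∉ stab := (hst i j b hadj).mp hp
        rcases hd with ⟨_, hb⟩ | ⟨hq', _⟩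
        · exact ⟨b, ⟨hadj, hb⟩, rfl⟩
        · exact absurd hq' hq
      · rintro ⟨j', ⟨hadj, hb⟩, hEq⟩
        rw [Prod.mk.injEq] at hEq
        obtain ⟨rfl, rfl⟩ := hEq
        exact ⟨SimpleGraph.boxProd_adj.mpr (Or.inr ⟨hadj, rfl⟩), rfl, Or.inl ⟨hp, hb⟩⟩
    rw [← SimpleGraph.card_neighborFinset_eq_degree, hnb,
      Finset.card_image_of_injective _ hinj]
    have hs := card_split G₂ j
    have hd := h2 j
    rw [deltaPlus_eq_card] at hd
    omega
  · have hnb : (dirS G₁ G₂ stab).neighborFinset (i, j)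
        = (Finset.univ.filter fun j' => G₂.Adj j j' ∧ n₂ < 2 * (j - j').val).image
            (fun j' => (i, j')) := by
      ext q
      obtain ⟨a, b⟩ := q
      simp only [SimpleGraph.mem_neighborFinset, dirS_adj, Finset.mem_image,
        Finset.mem_filter, Finset.mem_univ, true_and]
      constructor
      · rintro ⟨hbox, h1, hd⟩
        have h1' : i = a := h1
        subst h1'
        have hadj : G₂.Adj j b := by
          rcases SimpleGraph.boxProd_adj.mp hbox with ⟨ha, _⟩ | ⟨ha, _⟩
          · exact absurd ha (G₁.loopless.irrefl i)
          · exact ha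
        rcases hd with ⟨hp', _⟩ | ⟨_, hb⟩
        · exact absurd hp' hp
        · exact ⟨b, ⟨hadj, hb⟩, rfl⟩
      · rintro ⟨j', ⟨hadj, hb⟩, hEq⟩
        rw [Prod.mk.injEq] at hEq
        obtain ⟨rfl, rfl⟩ := hEq
        have hq : (i, j') ∈ stab := by
          by_contra h
          exact hp ((hst i j j' hadj).mpr h)
        exact ⟨SimpleGraph.boxProd_adj.mpr (Or.inr ⟨hadj, rfl⟩), rfl, Or.inr ⟨hq, hb⟩⟩
    have hfe : (Finset.univ.filter fun j' => G₂.Adj j j' ∧ n₂ < 2 * (j - j').val)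
        = (Finset.univ.filter fun j' => G₂.Adj j j' ∧ 2 * (j' - j).val ≤ n₂) := by
      apply Finset.filter_congr
      intro j' _
      by_cases hadj : G₂.Adj j j'
      · have hv : (j - j').val = n₂ - (j' - j).val := val_sub_rev hadj.ne
        have hpos := val_pos_of_adj hadj
        have hlt := ZMod.val_lt (j' - j)
        have hne := hna j j' hadj
        simp only [hadj, true_and]
        constructor <;> intro h <;> omega
      · simp [hadj]
    rw [← SimpleGraph.card_neighborFinset_eq_degree, hnb,
      Finset.card_image_of_injective _ hinj, hfe, ← deltaPlus_eq_card]
    exact h2 j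

lemma dirE_twice_degree
    (hst : ∀ (j : ZMod n₂) (i i' : ZMod n₁), G₁.Adj i i' → ((i, j) ∈ stab ↔ (i', j) ∉ stab))
    (hna : ∀ i i' : ZMod n₁, G₁.Adj i i' → 2 * (i' - i).val ≠ n₁)
    (h2 : ∀ i, 2 * deltaPlus G₁ i = G₁.degree i)
    (p : ZMod n₁ × ZMod n₂) :
    2 * (dirE G₁ G₂ stab).degree p = G₁.degree p.1 := by
  classical
  obtain ⟨i, j⟩ := p
  show 2 * (dirE G₁ G₂ stab).degree (i, j) = G₁.degree i
  have hinj : Function.Injective (fun i' : ZMod n₁ => (i', j)) :=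
    fun a b h => congrArg Prod.fst h
  by_cases hp : (i, j) ∈ stab
  · have hnb : (dirE G₁ G₂ stab).neighborFinset (i, j)
        = (Finset.univ.filter fun i' => G₁.Adj i i' ∧ 2 * (i' - i).val ≤ n₁).image
            (fun i' => (i', j)) := by
      ext q
      obtain ⟨a, b⟩ := q
      simp only [SimpleGraph.mem_neighborFinset, dirE_adj, Finset.mem_image,
        Finset.mem_filter, Finset.mem_univ, true_and]
      constructor
      · rintro ⟨hbox, h1, hd⟩
        have h1' : j = b := h1
        subst h1'
        have hadj : G₁.Adj i a := by
          rcases SimpleGraph.boxProd_adj.mp hbox with ⟨ha, _⟩ | ⟨ha, _⟩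
          · exact ha
          · exact absurd ha (G₂.loopless.irrefl j)
        have hq : (a, j) ∉ stab := (hst j i a hadj).mp hp
        rcases hd with ⟨_, hb⟩ | ⟨hq', _⟩
        · exact ⟨a, ⟨hadj, hb⟩, rfl⟩
        · exact absurd hq' hq
      · rintro ⟨i', ⟨hadj, hb⟩, hEq⟩
        rw [Prod.mk.injEq] at hEq
        obtain ⟨rfl, rfl⟩ := hEq
        exact ⟨SimpleGraph.boxProd_adj.mpr (Or.inl ⟨hadj, rfl⟩), rfl, Or.inl ⟨hp, hb⟩⟩
    rw [← SimpleGraph.card_neighborFinset_eq_degree, hnb,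
      Finset.card_image_of_injective _ hinj, ← deltaPlus_eq_card]
    exact h2 i
  · have hnb : (dirE G₁ G₂ stab).neighborFinset (i, j)
        = (Finset.univ.filter fun i' => G₁.Adj i i' ∧ 2 * (i - i').val ≤ n₁).image
            (fun i' => (i', j)) := by
      ext q
      obtain ⟨a, b⟩ := q
      simp only [SimpleGraph.mem_neighborFinset, dirE_adj, Finset.mem_image,
        Finset.mem_filter, Finset.mem_univ, true_and]
      constructor
      · rintro ⟨hbox, h1, hd⟩
        have h1' : j = b := h1
        subst h1'
        have hadj : G₁.Adj i a := by
          rcases SimpleGraph.boxProd_adj.mp hbox with ⟨ha, _⟩ | ⟨ha, _⟩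
          · exact ha
          · exact absurd ha (G₂.loopless.irrefl j)
        rcases hd with ⟨hp', _⟩ | ⟨_, hb⟩
        · exact absurd hp' hp
        · exact ⟨a, ⟨hadj, hb⟩, rfl⟩
      · rintro ⟨i', ⟨hadj, hb⟩, hEq⟩
        rw [Prod.mk.injEq] at hEq
        obtain ⟨rfl, rfl⟩ := hEq
        have hq : (i', j) ∈ stab := by
          by_contra h
          exact hp ((hst j i i' hadj).mpr h)
        exact ⟨SimpleGraph.boxProd_adj.mpr (Or.inl ⟨hadj, rfl⟩), rfl, Or.inr ⟨hq, hb⟩⟩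
    have hfe : (Finset.univ.filter fun i' => G₁.Adj i i' ∧ 2 * (i - i').val ≤ n₁)
        = (Finset.univ.filter fun i' => G₁.Adj i i' ∧ n₁ < 2 * (i' - i).val) := by
      apply Finset.filter_congr
      intro i' _
      by_cases hadj : G₁.Adj i i'
      · have hv : (i - i').val = n₁ - (i' - i).val := val_sub_rev hadj.ne
        have hpos := val_pos_of_adj hadj
        have hlt := ZMod.val_lt (i' - i)
        have hne := hna i i' hadj
        simp only [hadj, true_and]
        constructor <;> intro h <;> omega
      · simp [hadj]
    rw [← SimpleGraph.card_neighborFinset_eq_degree, hnb,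
      Finset.card_image_of_injective _ hinj, hfe]
    have hs := card_split G₁ i
    have hd := h2 i
    rw [deltaPlus_eq_card] at hd
    omega

lemma dirW_twice_degree
    (hst : ∀ (j : ZMod n₂) (i i' : ZMod n₁), G₁.Adj i i' → ((i, j) ∈ stab ↔ (i', j) ∉ stab))
    (hna : ∀ i i' : ZMod n₁, G₁.Adj i i' → 2 * (i' - i).val ≠ n₁)
    (h2 : ∀ i, 2 * deltaPlus G₁ i = G₁.degree i)
    (p : ZMod n₁ × ZMod n₂) :
    2 * (dirW G₁ G₂ stab).degree p = G₁.degree p.1 := by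
  classical
  obtain ⟨i, j⟩ := p
  show 2 * (dirW G₁ G₂ stab).degree (i, j) = G₁.degree i
  have hinj : Function.Injective (fun i' : ZMod n₁ => (i', j)) :=
    fun a b h => congrArg Prod.fst h
  by_cases hp : (i, j) ∈ stab
  · have hnb : (dirW G₁ G₂ stab).neighborFinset (i, j)
        = (Finset.univ.filter fun i' => G₁.Adj i i' ∧ n₁ < 2 * (i' - i).val).image
            (fun i' => (i', j)) := by
      ext q
      obtain ⟨a, b⟩ := q
      simp only [SimpleGraph.mem_neighborFinset, dirW_adj, Finset.mem_image,
        Finset.mem_filter, Finset.mem_univ, true_and]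
      constructor
      · rintro ⟨hbox, h1, hd⟩
        have h1' : j = b := h1
        subst h1'
        have hadj : G₁.Adj i a := by
          rcases SimpleGraph.boxProd_adj.mp hbox with ⟨ha, _⟩ | ⟨ha, _⟩
          · exact ha
          · exact absurd ha (G₂.loopless.irrefl j)
        have hq : (a, j) ∉ stab := (hst j i a hadj).mp hp
        rcases hd with ⟨_, hb⟩ | ⟨hq', _⟩
        · exact ⟨a, ⟨hadj, hb⟩, rfl⟩
        · exact absurd hq' hq
      · rintro ⟨i', ⟨hadj, hb⟩, hEq⟩
        rw [Prod.mk.injEq] at hEq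
        obtain ⟨rfl, rfl⟩ := hEq
        exact ⟨SimpleGraph.boxProd_adj.mpr (Or.inl ⟨hadj, rfl⟩), rfl, Or.inl ⟨hp, hb⟩⟩
    rw [← SimpleGraph.card_neighborFinset_eq_degree, hnb,
      Finset.card_image_of_injective _ hinj]
    have hs := card_split G₁ i
    have hd := h2 i
    rw [deltaPlus_eq_card] at hd
    omega
  · have hnb : (dirW G₁ G₂ stab).neighborFinset (i, j)
        = (Finset.univ.filter fun i' => G₁.Adj i i' ∧ n₁ < 2 * (i - i').val).image
            (fun i' => (i', j)) := by
      ext q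
      obtain ⟨a, b⟩ := q
      simp only [SimpleGraph.mem_neighborFinset, dirW_adj, Finset.mem_image,
        Finset.mem_filter, Finset.mem_univ, true_and]
      constructor
      · rintro ⟨hbox, h1, hd⟩
        have h1' : j = b := h1
        subst h1'
        have hadj : G₁.Adj i a := by
          rcases SimpleGraph.boxProd_adj.mp hbox with ⟨ha, _⟩ | ⟨ha, _⟩
          · exact ha
          · exact absurd ha (G₂.loopless.irrefl j)
        rcases hd with ⟨hp', _⟩ | ⟨_, hb⟩
        · exact absurd hp' hp
        · exact ⟨a, ⟨hadj, hb⟩, rfl⟩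
      · rintro ⟨i', ⟨hadj, hb⟩, hEq⟩
        rw [Prod.mk.injEq] at hEq
        obtain ⟨rfl, rfl⟩ := hEq
        have hq : (i', j) ∈ stab := by
          by_contra h
          exact hp ((hst j i i' hadj).mpr h)
        exact ⟨SimpleGraph.boxProd_adj.mpr (Or.inl ⟨hadj, rfl⟩), rfl, Or.inr ⟨hq, hb⟩⟩
    have hfe : (Finset.univ.filter fun i' => G₁.Adj i i' ∧ n₁ < 2 * (i - i').val)
        = (Finset.univ.filter fun i' => G₁.Adj i i' ∧ 2 * (i' - i).val ≤ n₁) := by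
      apply Finset.filter_congr
      intro i' _
      by_cases hadj : G₁.Adj i i'
      · have hv : (i - i').val = n₁ - (i' - i).val := val_sub_rev hadj.ne
        have hpos := val_pos_of_adj hadj
        have hlt := ZMod.val_lt (i' - i)
        have hne := hna i i' hadj
        simp only [hadj, true_and]
        constructor <;> intro h <;> omega
      · simp [hadj]
    rw [← SimpleGraph.card_neighborFinset_eq_degree, hnb,
      Finset.card_image_of_injective _ hinj, hfe, ← deltaPlus_eq_card]
    exact h2 i

lemma maxDegree_eq_of_forall {V W : Type*} [Fintype V] [Nonempty V] [Fintype W]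
    (H : SimpleGraph V) (G : SimpleGraph W) (f : V → W) (hf : Function.Surjective f)
    (h : ∀ p, 2 * H.degree p = G.degree (f p)) : 2 * H.maxDegree = G.maxDegree := by
  classical
  obtain ⟨p, hp⟩ := H.exists_maximal_degree_vertex
  apply le_antisymm
  · rw [hp, h p]
    exact G.degree_le_maxDegree _
  · haveI : Nonempty W := ⟨f (Classical.arbitrary V)⟩
    obtain ⟨w, hw⟩ := G.exists_maximal_degree_vertex
    obtain ⟨p', rfl⟩ := hf w
    rw [hw, ← h p']
    exact Nat.mul_le_mul_left 2 (H.degree_le_maxDegree _)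

lemma degree_inst_irrel {V : Type*} (G : SimpleGraph V) (v : V)
    (i1 i2 : Fintype (G.neighborSet v)) :
    @SimpleGraph.degree V G v i1 = @SimpleGraph.degree V G v i2 := by
  rw [Subsingleton.elim i1 i2]

lemma boxProd_maxDegree' :
    (G₁.boxProd G₂).maxDegree = G₁.maxDegree + G₂.maxDegree := by
  classical
  obtain ⟨p, hp⟩ := (G₁.boxProd G₂).exists_maximal_degree_vertex
  obtain ⟨i, hi⟩ := G₁.exists_maximal_degree_vertex
  obtain ⟨j, hj⟩ := G₂.exists_maximal_degree_vertex
  apply le_antisymm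
  · have hbd : ∀ inst : Fintype ((G₁.boxProd G₂).neighborSet p),
        @SimpleGraph.degree _ (G₁.boxProd G₂) p inst = G₁.degree p.1 + G₂.degree p.2 := by
      intro inst
      rw [Subsingleton.elim inst (SimpleGraph.boxProdFintypeNeighborSet p)]
      clear inst
      exact SimpleGraph.degree_boxProd _
    rw [hp, hbd _]
    exact Nat.add_le_add (G₁.degree_le_maxDegree _) (G₂.degree_le_maxDegree _)
  · have hbd : ∀ inst : Fintype ((G₁.boxProd G₂).neighborSet (i, j)),
        @SimpleGraph.degree _ (G₁.boxProd G₂) (i, j) inst = G₁.degree i + G₂.degree j := by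
      intro inst
      rw [Subsingleton.elim inst (SimpleGraph.boxProdFintypeNeighborSet (i, j))]
      clear inst
      exact SimpleGraph.degree_boxProd _
    rw [hi, hj, ← hbd ((G₁.boxProd G₂).neighborSetFintype (i, j))]
    exact (G₁.boxProd G₂).degree_le_maxDegree (i, j)

end Dir


end Aux


/-- tightness in Lemma 4 of the paper. If every vertex of `G₁` and `G₂` has
even degree and both labelings are balanced, then
`deg(T_N) + deg(T_S) + deg(T_E) + deg(T_W) = deg(T) = deg(G₁) + deg(G₂)`
for `T = G₁ □ G₂`. -/
theorem direction_subgraphs_maxDegree_tight {n₁ n₂ : ℕ} [NeZero n₁] [NeZero n₂]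
    (G₁ : SimpleGraph (ZMod n₁)) (G₂ : SimpleGraph (ZMod n₂))
    (B₁ C₁ : Set (ZMod n₁)) (B₂ C₂ : Set (ZMod n₂))
    (hcover₁ : B₁ ∪ C₁ = Set.univ) (hdisj₁ : Disjoint B₁ C₁)
    (hcover₂ : B₂ ∪ C₂ = Set.univ) (hdisj₂ : Disjoint B₂ C₂)
    (hbip₁ : ∀ u v, G₁.Adj u v → (u ∈ B₁ ∧ v ∈ C₁) ∨ (u ∈ C₁ ∧ v ∈ B₁))
    (hbip₂ : ∀ u v, G₂.Adj u v → (u ∈ B₂ ∧ v ∈ C₂) ∨ (u ∈ C₂ ∧ v ∈ B₂))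
    (heven₁ : ∀ i : ZMod n₁, Even (G₁.degree i))
    (heven₂ : ∀ j : ZMod n₂, Even (G₂.degree j))
    (hbal₁ : ∀ i : ZMod n₁,
      (deltaPlus G₁ i : ℤ) - (deltaMinus G₁ i : ℤ) = (G₁.degree i : ℤ) % 2)
    (hbal₂ : ∀ j : ZMod n₂,
      (deltaPlus G₂ j : ℤ) - (deltaMinus G₂ j : ℤ) = (G₂.degree j : ℤ) % 2) :
    (dirN G₁ G₂ (stabSet B₁ C₁ B₂ C₂)).maxDegree +
        (dirS G₁ G₂ (stabSet B₁ C₁ B₂ C₂)).maxDegree +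
        (dirE G₁ G₂ (stabSet B₁ C₁ B₂ C₂)).maxDegree +
        (dirW G₁ G₂ (stabSet B₁ C₁ B₂ C₂)).maxDegree = (G₁.boxProd G₂).maxDegree ∧
      (G₁.boxProd G₂).maxDegree = G₁.maxDegree + G₂.maxDegree := by
  classical
  have hd₁ : ∀ x, x ∈ B₁ → x ∉ C₁ := fun x hx => Set.disjoint_left.mp hdisj₁ hx
  have hd₂ : ∀ x, x ∈ B₂ → x ∉ C₂ := fun x hx => Set.disjoint_left.mp hdisj₂ hx
  have hc₁ : ∀ x : ZMod n₁, x ∈ B₁ ∨ x ∈ C₁ := fun x => by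
    have hx : x ∈ B₁ ∪ C₁ := hcover₁.symm ▸ Set.mem_univ x
    exact hx
  have hc₂ : ∀ x : ZMod n₂, x ∈ B₂ ∨ x ∈ C₂ := fun x => by
    have hx : x ∈ B₂ ∪ C₂ := hcover₂.symm ▸ Set.mem_univ x
    exact hx
  have hstV : ∀ (i : ZMod n₁) (j j' : ZMod n₂), G₂.Adj j j' →
      ((i, j) ∈ stabSet B₁ C₁ B₂ C₂ ↔ (i, j') ∉ stabSet B₁ C₁ B₂ C₂) := by
    intro i j j' hadj
    have hj := hbip₂ j j' hadj
    have hi := hc₁ i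
    have d1 : ¬(i ∈ B₁ ∧ i ∈ C₁) := fun h => hd₁ i h.1 h.2
    have d2 : ¬(j ∈ B₂ ∧ j ∈ C₂) := fun h => hd₂ j h.1 h.2
    have d3 : ¬(j' ∈ B₂ ∧ j' ∈ C₂) := fun h => hd₂ j' h.1 h.2
    simp only [stabSet, Set.mem_union, Set.mem_prod]
    tauto
  have hstH : ∀ (j : ZMod n₂) (i i' : ZMod n₁), G₁.Adj i i' →
      ((i, j) ∈ stabSet B₁ C₁ B₂ C₂ ↔ (i', j) ∉ stabSet B₁ C₁ B₂ C₂) := by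
    intro j i i' hadj
    have hi := hbip₁ i i' hadj
    have hjc := hc₂ j
    have d1 : ¬(j ∈ B₂ ∧ j ∈ C₂) := fun h => hd₂ j h.1 h.2
    have d2 : ¬(i ∈ B₁ ∧ i ∈ C₁) := fun h => hd₁ i h.1 h.2
    have d3 : ¬(i' ∈ B₁ ∧ i' ∈ C₁) := fun h => hd₁ i' h.1 h.2
    simp only [stabSet, Set.mem_union, Set.mem_prod]
    tauto
  have hna₂ := no_antipodal G₂ heven₂ hbal₂
  have hna₁ := no_antipodal G₁ heven₁ hbal₁
  have h2₂ : ∀ j, 2 * deltaPlus G₂ j = G₂.degree j := two_deltaPlus G₂ heven₂ hbal₂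
  have h2₁ : ∀ i, 2 * deltaPlus G₁ i = G₁.degree i := two_deltaPlus G₁ heven₁ hbal₁
  have hN := maxDegree_eq_of_forall (dirN G₁ G₂ (stabSet B₁ C₁ B₂ C₂)) G₂ Prod.snd
    (fun j => ⟨(0, j), rfl⟩) (dirN_twice_degree G₁ G₂ _ hstV hna₂ h2₂)
  have hS := maxDegree_eq_of_forall (dirS G₁ G₂ (stabSet B₁ C₁ B₂ C₂)) G₂ Prod.snd
    (fun j => ⟨(0, j), rfl⟩) (dirS_twice_degree G₁ G₂ _ hstV hna₂ h2₂)
  have hE := maxDegree_eq_of_forall (dirE G₁ G₂ (stabSet B₁ C₁ B₂ C₂)) G₁ Prod.fst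
    (fun i => ⟨(i, 0), rfl⟩) (dirE_twice_degree G₁ G₂ _ hstH hna₁ h2₁)
  have hW := maxDegree_eq_of_forall (dirW G₁ G₂ (stabSet B₁ C₁ B₂ C₂)) G₁ Prod.fst
    (fun i => ⟨(i, 0), rfl⟩) (dirW_twice_degree G₁ G₂ _ hstH hna₁ h2₁)
  have hbox := boxProd_maxDegree' G₁ G₂
  exact ⟨by omega, hbox⟩
end
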